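/- arXiv:2508.12039 — 2 statements merged into one kernel-verified Lean document; each statement's English description precedes it below -/
import Mathlib

section
/- Let A = [[αI_r, C],[D, βI_{n-r}]] with n ≤ 2r, and θ ∈ R. Set M(θ) = C*C + DD* - 2Re(e^{-2iθ}DC) with eigenvalues μ_1(θ),…,μ_{n-r}(θ). Then the eigenvalues of H_θ(A) are: Re(e^{-iθ}α) with multiplicity 2r - n, together with λ_{j,±}(θ) = (1/2)Re(e^{-iθ}(α+β)) ± sqrt((Re(e^{-iθ}ω))² - μ_j(θ)/4) for j = 1,…,n-r, where ω = (α-β)/2. -/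
open Matrix Polynomial

lemma eval_cp {n : Type*} [DecidableEq n] [Fintype n] (N : Matrix n n ℂ) (x : ℂ) :
    eval x N.charpoly = (x • (1 : Matrix n n ℂ) - N).det := by
  rw [Matrix.charpoly, ← Polynomial.coe_evalRingHom, RingHom.map_det]
  congr 1
  ext i j
  by_cases h : i = j <;>
    simp [h, charmatrix_apply, Matrix.one_apply, Matrix.diagonal_apply]

lemma det_block {r s : ℕ} (hrs : s ≤ r) (a b x : ℂ)
    (P : Matrix (Fin r) (Fin s) ℂ) (Q : Matrix (Fin s) (Fin r) ℂ)
    (N : Matrix (Fin s) (Fin s) ℂ) (hQP : Q * P = (-(4:ℂ)⁻¹) • N)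
    (μ : Fin s → ℝ) (hn : N.charpoly = ∏ j : Fin s, (X - Polynomial.C ((μ j : ℂ))))
    (hxa : x ≠ a) (hxb : x ≠ b) :
    (x • (1 : Matrix (Fin r ⊕ Fin s) (Fin r ⊕ Fin s) ℂ)
        - Matrix.fromBlocks (a • 1) P Q (b • 1)).det
      = (x - a) ^ (r - s) * ∏ j : Fin s, ((x - a) * (x - b) + (μ j : ℂ)/4) := by
  set u := x - a with hu'
  set v := x - b with hv'
  have hu : u ≠ 0 := sub_ne_zero.2 hxa
  have hv : v ≠ 0 := sub_ne_zero.2 hxb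
  set w : ℂ := (u * v)⁻¹ with hw'
  have huv : u * v ≠ 0 := mul_ne_zero hu hv
  have hw : w ≠ 0 := inv_ne_zero huv
  have hww : w * (u * v) = 1 := inv_mul_cancel₀ huv
  -- step 1 : block form
  have h1 : x • (1 : Matrix (Fin r ⊕ Fin s) (Fin r ⊕ Fin s) ℂ)
      - Matrix.fromBlocks (a • 1) P Q (b • 1)
      = Matrix.fromBlocks (u • 1) (-P) (-Q) (v • 1) := by
    rw [show (1 : Matrix (Fin r ⊕ Fin s) (Fin r ⊕ Fin s) ℂ)
        = Matrix.fromBlocks 1 0 0 1 from (fromBlocks_one).symm,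
      Matrix.fromBlocks_smul, smul_zero, sub_eq_add_neg, fromBlocks_neg, fromBlocks_add,
      fromBlocks_inj]
    refine ⟨?_, by simp, by simp, ?_⟩ <;> module
  rw [h1]
  letI : Invertible (v • (1 : Matrix (Fin s) (Fin s) ℂ)) :=
    ⟨v⁻¹ • 1, by rw [Matrix.smul_mul, Matrix.mul_smul, smul_smul, Matrix.mul_one,
        inv_mul_cancel₀ hv, one_smul],
      by rw [Matrix.smul_mul, Matrix.mul_smul, smul_smul, Matrix.mul_one,
        mul_inv_cancel₀ hv, one_smul]⟩
  rw [det_fromBlocks₂₂]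
  have hinv : ⅟(v • (1 : Matrix (Fin s) (Fin s) ℂ)) = v⁻¹ • (1 : Matrix (Fin s) (Fin s) ℂ) := rfl
  rw [hinv]
  have h4 : u • (1 : Matrix (Fin r) (Fin r) ℂ) - -P * (v⁻¹ • (1 : Matrix (Fin s) (Fin s) ℂ)) * -Q
      = u • ((1 : Matrix (Fin r) (Fin r) ℂ) - w • (P * Q)) := by
    simp only [Matrix.neg_mul, Matrix.mul_neg, neg_neg, Matrix.mul_smul, Matrix.smul_mul,
      Matrix.mul_one, smul_sub, smul_smul, smul_neg, neg_neg]
    rw [show u * w = v⁻¹ by rw [hw']; field_simp]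
  rw [h4, det_smul, det_smul, det_one, Fintype.card_fin, Fintype.card_fin, mul_one]
  have h6 : (1 : Matrix (Fin r) (Fin r) ℂ) - w • (P * Q) = 1 + P * ((-w) • Q) := by
    rw [Matrix.mul_smul, neg_smul, sub_eq_add_neg]
  rw [h6, det_one_add_mul_comm, Matrix.smul_mul, hQP, smul_smul]
  have h7 : (1 : Matrix (Fin s) (Fin s) ℂ) + (-w * -4⁻¹) • N
      = (-(w/4)) • (((-4/w) • (1 : Matrix (Fin s) (Fin s) ℂ)) - N) := by
    rw [smul_sub, smul_smul, show -(w/4) * (-4/w) = 1 by field_simp, one_smul,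
      sub_eq_add_neg, ← neg_smul]
    congr 1
    ring
  rw [h7, det_smul, Fintype.card_fin,
    show ((-4/w) • (1 : Matrix (Fin s) (Fin s) ℂ)) - N
      = (-4/w) • (1 : Matrix (Fin s) (Fin s) ℂ) - N from rfl,
    ← eval_cp, hn]
  simp only [eval_prod, eval_sub, eval_X, eval_C]
  have hwinv : w⁻¹ = u * v := by rw [hw', inv_inv]
  have hfac : ∀ j : Fin s, u * v + (μ j : ℂ)/4 = (v * (u * -(w/4))) * (-4/w - (μ j : ℂ)) := by
    intro j
    rw [show (-4:ℂ)/w = -4*(u*v) by rw [div_eq_mul_inv, hwinv]]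
    linear_combination (-(u*v + (μ j:ℂ)/4)) * hww
  clear_value u v w
  calc v ^ s * (u ^ r * ((-(w / 4)) ^ s * ∏ j : Fin s, (-4/w - (μ j:ℂ))))
      = u ^ (r-s) * ((v * (u * -(w/4))) ^ s * ∏ j : Fin s, (-4/w - (μ j:ℂ))) := by
        rw [show u ^ r = u ^ (r-s) * u ^ s by rw [← pow_add, Nat.sub_add_cancel hrs]]
        ring
    _ = u ^ (r-s) * ∏ j : Fin s, ((v * (u * -(w/4))) * (-4/w - (μ j:ℂ))) := by
        rw [Finset.prod_mul_distrib, Finset.prod_const, Finset.card_univ, Fintype.card_fin]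
    _ = u ^ (r-s) * ∏ j : Fin s, (u * v + (μ j : ℂ)/4) := by
        rw [Finset.prod_congr rfl (fun j _ => (hfac j).symm)]

lemma expth (θ : ℝ) : Complex.exp (-(θ:ℂ)*Complex.I) = (Real.cos θ : ℂ) - (Real.sin θ:ℂ)*Complex.I := by
  rw [show -(θ:ℂ)*Complex.I = (-θ:ℂ)*Complex.I by ring, Complex.exp_mul_I]
  push_cast [Complex.ofReal_cos, Complex.ofReal_sin]
  simp [Complex.cos_neg, Complex.sin_neg]
  ring

lemma scl (θ : ℝ) (α : ℂ) :
    (Real.cos θ:ℂ) * ((2:ℂ)⁻¹ * (α + (starRingEnd ℂ) α)) +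
      (Real.sin θ:ℂ) * ((2*Complex.I)⁻¹ * (α - (starRingEnd ℂ) α)) =
    ((Complex.exp (-(θ:ℂ)*Complex.I) * α).re : ℂ) := by
  rw [expth, Complex.ext_iff]
  constructor <;>
    simp [Complex.mul_re, Complex.mul_im, Complex.inv_re, Complex.inv_im, Complex.normSq] <;> ring


theorem stmt8 {r s : ℕ} (hrs : s ≤ r) (α β : ℂ) (hab : α ≠ β)
    (C : Matrix (Fin r) (Fin s) ℂ) (D : Matrix (Fin s) (Fin r) ℂ) (θ : ℝ)
    (μ : Fin s → ℝ)
    (J : Matrix (Fin r ⊕ Fin s) (Fin r ⊕ Fin s) ℂ)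
    (hJ : J = Matrix.fromBlocks 1 0 0 (-1))
    (A : Matrix (Fin r ⊕ Fin s) (Fin r ⊕ Fin s) ℂ)
    (hA : A = Matrix.fromBlocks (α • 1) C D (β • 1))
    (M : Matrix (Fin s) (Fin s) ℂ)
    (hM : M = Cᴴ * C + D * Dᴴ -
      (Complex.exp (-2 * (θ : ℂ) * Complex.I) • (D * C) +
        (Complex.exp (-2 * (θ : ℂ) * Complex.I) • (D * C))ᴴ))
    (hμ : M.charpoly = ∏ j : Fin s, (X - Polynomial.C ((μ j : ℂ))))
    (Hθ : Matrix (Fin r ⊕ Fin s) (Fin r ⊕ Fin s) ℂ)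
    (hHθ : Hθ = (Real.cos θ : ℂ) • ((2 : ℂ)⁻¹ • (A + J * Aᴴ * J)) +
      (Real.sin θ : ℂ) • ((2 * Complex.I)⁻¹ • (A - J * Aᴴ * J))) :
    ∃ ρ : Fin s → ℂ,
      (∀ j, ρ j ^ 2 =
        (((Complex.exp (-(θ : ℂ) * Complex.I) * ((α - β) / 2)).re : ℂ)) ^ 2
          - (μ j : ℂ) / 4) ∧
      Hθ.charpoly =
        (X - Polynomial.C (((Complex.exp (-(θ : ℂ) * Complex.I) * α).re : ℂ))) ^ (r - s) *
        ∏ j : Fin s,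
          ((X - Polynomial.C
              ((((Complex.exp (-(θ : ℂ) * Complex.I) * (α + β)).re : ℂ)) / 2 + ρ j)) *
           (X - Polynomial.C
              ((((Complex.exp (-(θ : ℂ) * Complex.I) * (α + β)).re : ℂ)) / 2 - ρ j))) := by
  choose ρ hρ using fun j : Fin s =>
    IsAlgClosed.exists_pow_nat_eq (k := ℂ)
      ((((Complex.exp (-(θ : ℂ) * Complex.I) * ((α - β) / 2)).re : ℂ)) ^ 2
        - (μ j : ℂ) / 4) (n := 2) (by norm_num)
  refine ⟨ρ, hρ, ?_⟩
  -- abbreviations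
  set a : ℂ := ((Complex.exp (-(θ:ℂ)*Complex.I) * α).re : ℂ) with ha'
  set b : ℂ := ((Complex.exp (-(θ:ℂ)*Complex.I) * β).re : ℂ) with hb'
  set P : Matrix (Fin r) (Fin s) ℂ :=
    (Real.cos θ:ℂ) • ((2:ℂ)⁻¹ • (C - Dᴴ)) + (Real.sin θ:ℂ) • ((2*Complex.I)⁻¹ • (C + Dᴴ)) with hP'
  set Q : Matrix (Fin s) (Fin r) ℂ :=
    (Real.cos θ:ℂ) • ((2:ℂ)⁻¹ • (D - Cᴴ)) + (Real.sin θ:ℂ) • ((2*Complex.I)⁻¹ • (D + Cᴴ)) with hQ'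
  -- block structure
  have hH : Hθ = Matrix.fromBlocks (a • 1) P Q (b • 1) := by
    subst hHθ hA hJ
    rw [fromBlocks_conjTranspose]
    simp only [fromBlocks_multiply, Matrix.one_mul, Matrix.mul_one, Matrix.zero_mul,
      Matrix.mul_zero, add_zero, zero_add, Matrix.neg_mul, Matrix.mul_neg, neg_neg,
      conjTranspose_smul, conjTranspose_one, neg_zero, sub_eq_add_neg, fromBlocks_neg,
      fromBlocks_add, Matrix.fromBlocks_smul]
    rw [fromBlocks_inj]
    refine ⟨?_, ?_, ?_, ?_⟩
    · rw [ha', ← scl θ α]; match_scalars <;> simp only [starRingEnd_apply] <;> ring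
    · rw [hP']; match_scalars <;> ring
    · rw [hQ']; match_scalars <;> ring
    · rw [hb', ← scl θ β]; match_scalars <;> simp only [starRingEnd_apply] <;> ring
  -- Q * P = -M/4
  have hQP : Q * P = (-(4:ℂ)⁻¹) • M := by
    have h1 : Complex.exp ((θ:ℂ)*Complex.I) = Complex.cos θ + Complex.sin θ * Complex.I :=
      Complex.exp_mul_I _
    have hE : Complex.exp (-2*(θ:ℂ)*Complex.I)
        = (Complex.cos (θ:ℂ) - Complex.sin (θ:ℂ)*Complex.I)^2 := by
      rw [show (-2*(θ:ℂ)*Complex.I) = ((-θ:ℂ))*Complex.I + ((-θ:ℂ))*Complex.I by ring,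
        Complex.exp_add, Complex.exp_mul_I, Complex.cos_neg, Complex.sin_neg]
      ring
    have hEc : (starRingEnd ℂ) (Complex.exp (-2*(θ:ℂ)*Complex.I))
        = (Complex.cos (θ:ℂ) + Complex.sin (θ:ℂ)*Complex.I)^2 := by
      rw [← Complex.exp_conj, show (starRingEnd ℂ) (-2*(θ:ℂ)*Complex.I) = (2*θ:ℂ)*Complex.I by
        simp only [_root_.map_mul, map_neg, map_ofNat, Complex.conj_ofReal, Complex.conj_I]; ring,
        show ((2*θ:ℂ))*Complex.I = (θ:ℂ)*Complex.I + (θ:ℂ)*Complex.I by ring,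
        Complex.exp_add, h1]
      ring
    have hsc : Complex.sin (θ:ℂ)^2 + Complex.cos (θ:ℂ)^2 = 1 := Complex.sin_sq_add_cos_sq _
    have hI : Complex.I^2 = -1 := Complex.I_sq
    rw [hP', hQ', hM]
    simp only [conjTranspose_smul, conjTranspose_mul, ← starRingEnd_apply]
    rw [hEc, hE]
    simp only [mul_inv, Complex.inv_I, Complex.ofReal_cos, Complex.ofReal_sin]
    simp only [Matrix.add_mul, Matrix.mul_add, Matrix.smul_mul, Matrix.mul_smul,
      Matrix.sub_mul, Matrix.mul_sub, Matrix.neg_mul, Matrix.mul_neg, smul_smul, smul_sub,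
      smul_add, smul_neg, sub_eq_add_neg, neg_add, neg_neg]
    match_scalars
    · ring
    · linear_combination (Complex.sin (θ:ℂ)^2/4) * hI - (1/4:ℂ) * hsc
    · linear_combination (Complex.sin (θ:ℂ)^2/4) * hI - (1/4:ℂ) * hsc
    · ring
  -- coercion facts
  have hre2 : ∀ z : ℂ, ((z/2).re : ℂ) = (z.re : ℂ)/2 := by
    intro z
    rw [Complex.div_re]
    push_cast
    simp [Complex.normSq]
    ring
  have habm : ((Complex.exp (-(θ:ℂ)*Complex.I) * (α+β)).re : ℂ) = a + b := by
    rw [ha', hb', mul_add, Complex.add_re]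
    push_cast
    ring
  have homg : ((Complex.exp (-(θ:ℂ)*Complex.I) * ((α-β)/2)).re : ℂ) = (a - b)/2 := by
    rw [show Complex.exp (-(θ:ℂ)*Complex.I) * ((α-β)/2)
        = (Complex.exp (-(θ:ℂ)*Complex.I) * α - Complex.exp (-(θ:ℂ)*Complex.I) * β)/2 by ring,
      hre2, Complex.sub_re, ha', hb']
    push_cast
    ring
  -- main identity via evaluation
  apply Polynomial.eq_of_infinite_eval_eq
  apply Set.Infinite.mono (s := ({a, b} : Set ℂ)ᶜ)
  · intro x hx
    simp only [Set.mem_compl_iff, Set.mem_insert_iff, Set.mem_singleton_iff, not_or] at hx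
    obtain ⟨hxa, hxb⟩ := hx
    simp only [Set.mem_setOf_eq]
    rw [eval_cp, hH, det_block hrs a b x P Q M hQP μ hμ hxa hxb]
    simp only [eval_mul, eval_prod, eval_pow, eval_sub, eval_add, eval_X, eval_C]
    congr 1
    refine Finset.prod_congr rfl (fun j _ => ?_)
    have hj := hρ j
    rw [homg] at hj
    rw [habm]
    linear_combination hj
  · exact Set.Finite.infinite_compl (Set.toFinite _)
end

section
/- Let A = [[αI_r, C],[D, βI_{n-r}]] with α ≠ β, C ≠ O, D = O, n ≤ 2r, and ‖C‖ < |α - β| (operator norm). Then for every θ in the interval (τ - θ_0, τ + θ_0), where τ = Arg(α - β) and θ_0 = arctan(sqrt(|α-β|²/‖C‖² - 1)), the matrix H_θ(A) has only real eigenvalues, namely Re(e^{-iθ}α) and (1/2)Re(e^{-iθ}(α+β)) ± sqrt((Re(e^{-iθ}ω))² - s_j²(θ)) where s_j(θ) are the singular values of (e^{-iθ}/2)C. -/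
open Matrix Polynomial



-- charpoly root -> eigenvector
lemma eig_of_root {n : Type*} [Fintype n] [DecidableEq n] (M : Matrix n n ℂ) (z : ℂ)
    (h : M.charpoly.IsRoot z) : ∃ v, v ≠ 0 ∧ M.mulVec v = z • v := by
  have h1 : (z • (1 : Matrix n n ℂ) - M).det = 0 := by
    have := h
    rw [Polynomial.IsRoot, Matrix.charpoly, eval_det, matPolyEquiv_charmatrix] at this
    rw [Polynomial.eval_sub, Polynomial.eval_X, Polynomial.eval_C] at this
    rw [show (Matrix.scalar n) z = z • (1 : Matrix n n ℂ) by simp [Matrix.scalar_apply, Matrix.smul_eq_diagonal_mul]] at this; exact this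
  obtain ⟨v, hv, hveq⟩ := (Matrix.exists_mulVec_eq_zero_iff).mpr h1
  refine ⟨v, hv, ?_⟩
  have := hveq
  rw [Matrix.sub_mulVec, sub_eq_zero] at this
  simpa [Matrix.smul_mulVec] using this.symm


lemma he' (θ : ℝ) : Complex.exp (-(θ : ℂ) * Complex.I) =
    (Real.cos θ : ℂ) - (Real.sin θ : ℂ) * Complex.I := by
  rw [show (-(θ:ℂ)) = ((-θ : ℝ) : ℂ) by push_cast; ring, Complex.exp_mul_I,
    ← Complex.ofReal_cos, ← Complex.ofReal_sin, Real.cos_neg, Real.sin_neg]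
  push_cast; ring

lemma scal1 (θ : ℝ) (z : ℂ) :
    (Real.cos θ : ℂ) * (2⁻¹ * (z + starRingEnd ℂ z)) +
      (Real.sin θ : ℂ) * ((2 * Complex.I)⁻¹ * (z - starRingEnd ℂ z)) =
    ((Complex.exp (-(θ : ℂ) * Complex.I) * z).re : ℂ) := by
  rw [he', Complex.add_conj, Complex.sub_conj]
  have hI := Complex.I_ne_zero
  field_simp
  simp [Complex.ext_iff]
  ring_nf

lemma scal2 (θ : ℝ) :
    (Real.cos θ : ℂ) * 2⁻¹ + (Real.sin θ : ℂ) * (2 * Complex.I)⁻¹ =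
    Complex.exp (-(θ : ℂ) * Complex.I) / 2 := by
  rw [he']; have hI := Complex.I_ne_zero
  field_simp
  ring_nf
  rw [Complex.I_sq]; ring

lemma scal3 (θ : ℝ) :
    (Real.cos θ : ℂ) * (2⁻¹ * (-1)) + (Real.sin θ : ℂ) * (2 * Complex.I)⁻¹ =
    -(starRingEnd ℂ (Complex.exp (-(θ : ℂ) * Complex.I) / 2)) := by
  have hc : starRingEnd ℂ (Complex.exp (-(θ : ℂ) * Complex.I)) =
      (Real.cos θ : ℂ) + (Real.sin θ : ℂ) * Complex.I := by
    rw [he', map_sub, _root_.map_mul, Complex.conj_ofReal, Complex.conj_ofReal, Complex.conj_I]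
    ring
  rw [map_div₀, hc, map_ofNat]
  have hI := Complex.I_ne_zero
  field_simp
  ring_nf
  rw [Complex.I_sq]; ring

lemma blockH {r s : ℕ} (θ : ℝ) (α β : ℂ) (C : Matrix (Fin r) (Fin s) ℂ) :
    (Real.cos θ : ℂ) • ((2 : ℂ)⁻¹ • ((fromBlocks (α • 1) C 0 (β • 1)) +
        (fromBlocks 1 0 0 (-1)) * (fromBlocks (α • (1 : Matrix (Fin r) (Fin r) ℂ)) C 0 (β • (1 : Matrix (Fin s) (Fin s) ℂ)))ᴴ * (fromBlocks 1 0 0 (-1)))) +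
      (Real.sin θ : ℂ) • ((2 * Complex.I)⁻¹ • ((fromBlocks (α • 1) C 0 (β • 1)) -
        (fromBlocks 1 0 0 (-1)) * (fromBlocks (α • 1) C 0 (β • 1))ᴴ * (fromBlocks 1 0 0 (-1)))) =
    fromBlocks (((Complex.exp (-(θ : ℂ) * Complex.I) * α).re : ℂ) • 1)
      ((Complex.exp (-(θ : ℂ) * Complex.I) / 2) • C)
      (-((Complex.exp (-(θ : ℂ) * Complex.I) / 2) • C)ᴴ)
      (((Complex.exp (-(θ : ℂ) * Complex.I) * β).re : ℂ) • 1) := by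
  rw [fromBlocks_conjTranspose]
  simp only [sub_eq_add_neg, conjTranspose_smul, conjTranspose_one, conjTranspose_zero,
    fromBlocks_multiply, fromBlocks_neg, fromBlocks_add, fromBlocks_smul]
  rw [fromBlocks_inj]
  refine ⟨?_, ?_, ?_, ?_⟩
  · simp only [Matrix.one_mul, Matrix.mul_one, Matrix.zero_mul, Matrix.mul_zero,
      Matrix.neg_mul, Matrix.mul_neg, Matrix.smul_mul, Matrix.mul_smul, add_zero, zero_add,
      neg_neg, neg_zero, smul_neg]
    ext i j
    rcases eq_or_ne i j with h|h
    · subst h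
      simp only [Matrix.add_apply, Matrix.smul_apply, Matrix.neg_apply, Matrix.one_apply_eq,
        smul_eq_mul, Complex.star_def]
      linear_combination scal1 θ α
    · simp [Matrix.one_apply_ne h]
  · simp only [Matrix.one_mul, Matrix.mul_one, Matrix.zero_mul, Matrix.mul_zero,
      Matrix.neg_mul, Matrix.mul_neg, Matrix.smul_mul, Matrix.mul_smul, add_zero, zero_add,
      neg_neg, neg_zero, smul_neg]
    ext i j
    simp only [Matrix.add_apply, Matrix.smul_apply, Matrix.neg_apply, Matrix.zero_apply,
      smul_eq_mul, Complex.star_def, Matrix.conjTranspose_apply, zero_add, add_zero]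
    linear_combination (scal2 θ) * C i j
  · simp only [Matrix.one_mul, Matrix.mul_one, Matrix.zero_mul, Matrix.mul_zero,
      Matrix.neg_mul, Matrix.mul_neg, Matrix.smul_mul, Matrix.mul_smul, add_zero, zero_add,
      neg_neg, neg_zero, smul_neg]
    ext i j
    simp only [Matrix.add_apply, Matrix.smul_apply, Matrix.neg_apply, Matrix.zero_apply,
      smul_eq_mul, Complex.star_def, Matrix.conjTranspose_apply, zero_add, add_zero]
    linear_combination (scal3 θ) * (starRingEnd ℂ (C j i))
  · simp only [Matrix.one_mul, Matrix.mul_one, Matrix.zero_mul, Matrix.mul_zero,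
      Matrix.neg_mul, Matrix.mul_neg, Matrix.smul_mul, Matrix.mul_smul, add_zero, zero_add,
      neg_neg, neg_zero, smul_neg]
    ext i j
    rcases eq_or_ne i j with h|h
    · subst h
      simp only [Matrix.add_apply, Matrix.smul_apply, Matrix.neg_apply, Matrix.one_apply_eq,
        smul_eq_mul, Complex.star_def]
      linear_combination scal1 θ β
    · simp [Matrix.one_apply_ne h]


lemma dp_star_self {m : Type*} [Fintype m] (y : m → ℂ) :
    star y ⬝ᵥ y = ((∑ i, Complex.normSq (y i) : ℝ) : ℂ) := by
  simp [dotProduct, Pi.star_apply, Complex.normSq_eq_conj_mul_self]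

lemma herm_eig {n m : Type*} [Fintype n] [Fintype m] (N : Matrix n m ℂ) (y : m → ℂ)
    (hy : y ≠ 0) (μ : ℂ) (h : (Nᴴ * N) *ᵥ y = μ • y) : ∃ c : ℝ, 0 ≤ c ∧ μ = (c : ℂ) := by
  set u := N *ᵥ y with hu
  have h1 : star y ⬝ᵥ ((Nᴴ * N) *ᵥ y) = star u ⬝ᵥ u := by
    rw [← Matrix.mulVec_mulVec, Matrix.dotProduct_mulVec, hu, Matrix.star_mulVec]
  have h2 : star y ⬝ᵥ ((Nᴴ * N) *ᵥ y) = μ * (star y ⬝ᵥ y) := by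
    rw [h, dotProduct_smul, smul_eq_mul]
  set pr := ∑ i, Complex.normSq (y i) with hpr
  set qr := ∑ i, Complex.normSq (u i) with hqr
  have hq0 : 0 ≤ qr := Finset.sum_nonneg fun i _ => Complex.normSq_nonneg _
  have hp0 : 0 < pr := by
    rcases Function.ne_iff.mp hy with ⟨i, hi⟩
    exact Finset.sum_pos' (fun j _ => Complex.normSq_nonneg _)
      ⟨i, Finset.mem_univ i, Complex.normSq_pos.mpr hi⟩
  have key : μ * (pr : ℂ) = (qr : ℂ) := by
    rw [← dp_star_self, ← dp_star_self, ← h1, h2]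
  refine ⟨qr / pr, div_nonneg hq0 hp0.le, ?_⟩
  have hpc : (pr : ℂ) ≠ 0 := by exact_mod_cast hp0.ne'
  field_simp
  rw [Complex.ofReal_div, ← key, mul_div_assoc, div_self hpc, mul_one]


-- R := (exp(-θ I) * (α - β)).re satisfies R > Cnorm
lemma angle_ineq (α β : ℂ) (hab : α ≠ β) (Cnorm : ℝ) (hCn0 : 0 < Cnorm)
    (hsmall : Cnorm < ‖α - β‖) (τ θ₀ : ℝ) (hτ : τ = (α - β).arg)
    (hθ₀ : θ₀ = Real.arctan (Real.sqrt (‖α - β‖ ^ 2 / Cnorm ^ 2 - 1)))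
    (θ : ℝ) (hθ : θ ∈ Set.Ioo (τ - θ₀) (τ + θ₀)) :
    Cnorm < (Complex.exp (-(θ : ℂ) * Complex.I) * (α - β)).re := by
  set R := ‖α - β‖ with hR
  have hR0 : 0 < R := hCn0.trans hsmall
  -- re formula
  have hre : (Complex.exp (-(θ : ℂ) * Complex.I) * (α - β)).re = R * Real.cos (τ - θ) := by
    have h1 : (α - β) = (R : ℂ) * Complex.exp ((τ : ℂ) * Complex.I) := by
      rw [hτ, hR]; exact (Complex.norm_mul_exp_arg_mul_I (α - β)).symm
    set φ := τ - θ with hφ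
    rw [h1, show Complex.exp (-(θ:ℂ) * Complex.I) * ((R:ℂ) * Complex.exp ((τ:ℂ) * Complex.I))
        = (R:ℂ) * Complex.exp ((φ : ℂ) * Complex.I) by
      rw [mul_comm (Complex.exp _), mul_assoc, ← Complex.exp_add, hφ]; push_cast; ring_nf]
    rw [Complex.exp_mul_I, ← Complex.ofReal_cos, ← Complex.ofReal_sin]
    simp only [Complex.mul_re, Complex.add_re, Complex.ofReal_re, Complex.mul_im,
      Complex.add_im, Complex.ofReal_im, Complex.I_re, Complex.I_im, Complex.cos_ofReal_re]
    ring
  rw [hre]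
  -- cos θ₀ = Cnorm / R
  have hq : ‖α - β‖ ^ 2 / Cnorm ^ 2 - 1 = (R ^ 2 - Cnorm ^ 2) / Cnorm ^ 2 := by
    field_simp
    rfl
  have hcos : Real.cos θ₀ = Cnorm / R := by
    rw [hθ₀, Real.cos_arctan, hq]
    rw [show (1 : ℝ) + Real.sqrt ((R ^ 2 - Cnorm ^ 2) / Cnorm ^ 2) ^ 2 = R ^ 2 / Cnorm ^ 2 by
      rw [Real.sq_sqrt (by
        apply div_nonneg _ (sq_nonneg _)
        nlinarith)]
      field_simp
      ring]
    rw [show R ^ 2 / Cnorm ^ 2 = (R / Cnorm) ^ 2 by ring,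
      Real.sqrt_sq (by positivity), one_div_div]
  -- now the cosine comparison
  have hθ₀pos : 0 ≤ θ₀ := by
    rw [hθ₀, ← Real.arctan_zero]
    exact Real.arctan_strictMono.monotone (Real.sqrt_nonneg _)
  have hθ₀pi : θ₀ ≤ Real.pi := by
    rw [hθ₀]; exact (Real.arctan_lt_pi_div_two _).le.trans (by linarith [Real.pi_pos])

  have habs : |τ - θ| < θ₀ := by
    rw [abs_lt]; obtain ⟨h1, h2⟩ := hθ; constructor <;> linarith
  have hcc : Real.cos θ₀ < Real.cos |τ - θ| :=
    Real.cos_lt_cos_of_nonneg_of_le_pi (abs_nonneg _) hθ₀pi habs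
  rw [Real.cos_abs] at hcc
  rw [hcos] at hcc
  calc Cnorm = R * (Cnorm / R) := by field_simp
    _ < R * Real.cos (τ - θ) := by
        exact (mul_lt_mul_iff_right₀ hR0).mpr hcc


lemma quad_real (z : ℂ) (m d : ℝ) (hd : 0 ≤ d) (h : (z - (m:ℂ)) ^ 2 = (d : ℂ)) :
    z.im = 0 ∧ ∃ t : ℝ, t ^ 2 = d ∧ z = ((m + t : ℝ) : ℂ) := by
  set t0 := Real.sqrt d with ht0
  have h2 : (z - (m:ℂ) - t0) * (z - (m:ℂ) + t0) = 0 := by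
    have : ((t0 : ℂ)) ^ 2 = (d : ℂ) := by
      rw [← Complex.ofReal_pow, Real.sq_sqrt hd]
    linear_combination h - this
  rcases mul_eq_zero.mp h2 with h3 | h3
  · have hz : z = ((m + t0 : ℝ) : ℂ) := by push_cast; linear_combination h3
    refine ⟨by rw [hz]; simp, t0, Real.sq_sqrt hd, hz⟩
  · have hz : z = ((m + (-t0) : ℝ) : ℂ) := by push_cast; linear_combination h3
    refine ⟨by rw [hz]; simp, -t0, by rw [neg_pow]; simp [ht0, Real.sq_sqrt hd], hz⟩

theorem stmt16 {r s : ℕ} (hrs : s ≤ r) (α β : ℂ) (hab : α ≠ β)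
    (C : Matrix (Fin r) (Fin s) ℂ) (hC : C ≠ 0)
    (J : Matrix (Fin r ⊕ Fin s) (Fin r ⊕ Fin s) ℂ)
    (hJ : J = Matrix.fromBlocks 1 0 0 (-1))
    (A : Matrix (Fin r ⊕ Fin s) (Fin r ⊕ Fin s) ℂ)
    (hA : A = Matrix.fromBlocks (α • 1) C 0 (β • 1))
    (Cnorm : ℝ) (hCn0 : 0 ≤ Cnorm)
    (hCnEig : ∃ v : Fin s → ℂ, v ≠ 0 ∧
      (Cᴴ * C).mulVec v = ((Cnorm ^ 2 : ℝ) : ℂ) • v)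
    (hCnMax : ∀ t : ℝ, (∃ v : Fin s → ℂ, v ≠ 0 ∧
      (Cᴴ * C).mulVec v = ((t : ℝ) : ℂ) • v) → t ≤ Cnorm ^ 2)
    (hsmall : Cnorm < ‖α - β‖)
    (τ θ₀ : ℝ) (hτ : τ = (α - β).arg)
    (hθ₀ : θ₀ = Real.arctan (Real.sqrt (‖α - β‖ ^ 2 / Cnorm ^ 2 - 1)))
    (θ : ℝ) (hθ : θ ∈ Set.Ioo (τ - θ₀) (τ + θ₀))
    (Hθ : Matrix (Fin r ⊕ Fin s) (Fin r ⊕ Fin s) ℂ)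
    (hHθ : Hθ = (Real.cos θ : ℂ) • ((2 : ℂ)⁻¹ • (A + J * Aᴴ * J)) +
      (Real.sin θ : ℂ) • ((2 * Complex.I)⁻¹ • (A - J * Aᴴ * J)))
    (Nθ : Matrix (Fin r) (Fin s) ℂ)
    (hN : Nθ = (Complex.exp (-(θ : ℂ) * Complex.I) / 2) • C) :
    ∀ z : ℂ, Hθ.charpoly.IsRoot z →
      z.im = 0 ∧
      (z = ((Complex.exp (-(θ : ℂ) * Complex.I) * α).re : ℂ) ∨
        ∃ sv t : ℝ, 0 ≤ sv ∧
          (∃ v : Fin s → ℂ, v ≠ 0 ∧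
            (Nθᴴ * Nθ).mulVec v = ((sv ^ 2 : ℝ) : ℂ) • v) ∧
          t ^ 2 = (Complex.exp (-(θ : ℂ) * Complex.I) * ((α - β) / 2)).re ^ 2 - sv ^ 2 ∧
          z = (((Complex.exp (-(θ : ℂ) * Complex.I) * (α + β)).re / 2 + t : ℝ) : ℂ)) := by
  intro z hz
  set e := Complex.exp (-(θ : ℂ) * Complex.I) with he
  -- Cnorm > 0
  have hCpos : 0 < Cnorm := by
    rcases hCn0.lt_or_eq with h | h
    · exact h
    · exfalso
      rw [← h] at hθ₀
      simp only [ne_eq, OfNat.ofNat_ne_zero, not_false_eq_true, zero_pow, div_zero,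
        zero_sub] at hθ₀
      rw [Real.sqrt_eq_zero_of_nonpos (by norm_num), Real.arctan_zero] at hθ₀
      obtain ⟨h1, h2⟩ := hθ
      rw [hθ₀] at h1 h2
      linarith
  -- block form
  have key : Hθ = fromBlocks (((e * α).re : ℂ) • 1) Nθ (-Nθᴴ) (((e * β).re : ℂ) • 1) := by
    rw [hHθ, hA, hJ, hN, he]
    exact blockH θ α β C
  set a' : ℝ := (e * α).re with ha'
  set b' : ℝ := (e * β).re with hb'
  -- eigenvector
  obtain ⟨v, hv0, hveq⟩ := eig_of_root Hθ z hz
  set x : Fin r → ℂ := v ∘ Sum.inl with hx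
  set y : Fin s → ℂ := v ∘ Sum.inr with hy
  have helim : v = Sum.elim x y := by funext i; cases i <;> rfl
  rw [key, helim, fromBlocks_mulVec] at hveq
  have eq1 : (a' : ℂ) • x + Nθ *ᵥ y = z • x := by
    funext i
    have := congrFun hveq (Sum.inl i)
    simpa [Matrix.smul_mulVec, Matrix.one_mulVec] using this
  have eq2 : (-Nθᴴ) *ᵥ x + (b' : ℂ) • y = z • y := by
    funext i
    have := congrFun hveq (Sum.inr i)
    simpa [Matrix.smul_mulVec, Matrix.one_mulVec] using this
  by_cases hy0 : y = 0
  · -- z = a'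
    have hx0 : x ≠ 0 := by
      intro h
      apply hv0
      rw [helim, h, hy0]
      funext i; cases i <;> rfl
    rcases Function.ne_iff.mp hx0 with ⟨i, hi⟩
    have : (a' : ℂ) * x i = z * x i := by
      have := congrFun eq1 i
      simpa [hy0, Matrix.mulVec_zero] using this
    have hza : z = (a' : ℂ) := by
      exact (mul_right_cancel₀ hi this).symm
    exact ⟨by rw [hza]; simp, Or.inl hza⟩
  · -- main case
    have eq2' : Nθᴴ *ᵥ x = ((b' : ℂ) - z) • y := by
      have h := eq2
      rw [Matrix.neg_mulVec] at h
      have : Nθᴴ *ᵥ x = (b' : ℂ) • y - z • y := by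
        rw [← h]; abel
      rw [this, ← sub_smul]
    have eq1' : Nθ *ᵥ y = (z - (a' : ℂ)) • x := by
      rw [sub_smul, ← eq1]; abel
    have hNNy : (Nθᴴ * Nθ) *ᵥ y = ((z - (a' : ℂ)) * ((b' : ℂ) - z)) • y := by
      rw [← Matrix.mulVec_mulVec, eq1', Matrix.mulVec_smul, eq2', smul_smul]
    obtain ⟨c, hc0, hμc⟩ := herm_eig Nθ y hy0 _ hNNy
    -- conj e * e = 1
    have hee : starRingEnd ℂ e * e = 1 := by
      rw [he, ← Complex.exp_conj]
      rw [← Complex.exp_add]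
      simp only [_root_.map_mul, map_neg, Complex.conj_ofReal, Complex.conj_I]
      rw [show -(θ : ℂ) * -Complex.I + -(θ : ℂ) * Complex.I = 0 by ring, Complex.exp_zero]
    -- C^H C y = 4c y
    have hCCy : (Cᴴ * C) *ᵥ y = (((4 * c : ℝ)) : ℂ) • y := by
      have hNN : Nθᴴ * Nθ = (starRingEnd ℂ (e / 2) * (e / 2)) • (Cᴴ * C) := by
        rw [hN, conjTranspose_smul, Matrix.smul_mul, Matrix.mul_smul, smul_smul]
        rfl
      have h4 : starRingEnd ℂ (e / 2) * (e / 2) = (4 : ℂ)⁻¹ := by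
        rw [map_div₀, map_ofNat]
        field_simp
        linear_combination 4 * hee
      rw [hNN, h4] at hNNy
      rw [Matrix.smul_mulVec] at hNNy
      have := congrArg (fun w => (4 : ℂ) • w) hNNy
      simp only [smul_smul] at this
      rw [show (4 : ℂ) * (4 : ℂ)⁻¹ = 1 by norm_num, one_smul] at this
      rw [this, hμc]
      norm_cast
    have hc_bound : 4 * c ≤ Cnorm ^ 2 := hCnMax (4 * c) ⟨y, hy0, hCCy⟩
    -- angle inequality
    have hangle : Cnorm < (e * (α - β)).re :=
      angle_ineq α β hab Cnorm hCpos hsmall τ θ₀ hτ hθ₀ θ hθ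
    set R : ℝ := (e * (α - β)).re with hR
    have hab' : a' - b' = R := by
      rw [ha', hb', hR, mul_sub, Complex.sub_re]
    -- d ≥ 0
    have hd0 : (0 : ℝ) ≤ (R / 2) ^ 2 - c := by nlinarith
    -- quadratic
    have hμc' : (z - (a' : ℂ)) * ((b' : ℂ) - z) = (c : ℂ) := hμc
    have hRC : (R : ℂ) = (a' : ℂ) - (b' : ℂ) := by
      rw [← hab']; push_cast; ring
    have hq : (z - (((a' + b') / 2 : ℝ) : ℂ)) ^ 2 = (((R / 2) ^ 2 - c : ℝ) : ℂ) := by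
      push_cast
      linear_combination (-1 : ℂ) * hμc' - (((a' : ℂ) - (b' : ℂ) + (R : ℂ)) / 4) * hRC
    obtain ⟨him, t, ht, hzt⟩ := quad_real z ((a' + b') / 2) ((R / 2) ^ 2 - c) hd0 hq
    refine ⟨him, Or.inr ⟨Real.sqrt c, t, Real.sqrt_nonneg _, ⟨y, hy0, ?_⟩, ?_, ?_⟩⟩
    · rw [Real.sq_sqrt hc0, hNNy, hμc]
    · rw [Real.sq_sqrt hc0, ht]
      have : (e * ((α - β) / 2)).re = R / 2 := by
        rw [hR, show e * ((α - β) / 2) = e * (α - β) / 2 by ring]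
        simp [Complex.div_re]
      rw [this]
    · rw [hzt]
      have : (e * (α + β)).re = a' + b' := by
        rw [ha', hb', mul_add]
        simp [Complex.add_re]
      rw [this]
end
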